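/- Let 0 ≤ a, x < p be integers and write the integer x − (p − a) in two's complement over n+1 bits (where p < 2^n). Then the sign bit of x − (p − a) equals 1 if and only if x + a < p, and in that case x + a mod p = (x + a − p) + p = x + a, while if the sign bit is 0 then x + a mod p = x + a − p. -/

import Mathlib

/-- Correctness of Takahashi's constant modular adder: for integers
    0 ≤ a, x < p < 2ⁿ, the sign bit (bit n of the (n+1)-bit two's complement
    representation) of x − (p − a) is 1 iff x + a < p; if it is 1 then
    (x + a) mod p = x + a, and if it is 0 then (x + a) mod p = x + a − p. -/
theorem takahashi_const_mod_adder (n : ℕ) (a x p : ℤ)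
    (ha₀ : 0 ≤ a) (hx₀ : 0 ≤ x) (ha : a < p) (hx : x < p) (hp : p < 2 ^ n) :
    (((x - (p - a)) % 2 ^ (n + 1)) / 2 ^ n = 1 ↔ x + a < p) ∧
    (x + a < p → (x + a) % p = x + a) ∧
    (¬ x + a < p → (x + a) % p = x + a - p) := by
  have hpow : (0:ℤ) < 2 ^ n := by positivity
  have hp0 : (0:ℤ) < p := lt_of_le_of_lt ha₀ ha
  have hpow2 : (2:ℤ) ^ (n + 1) = 2 ^ n * 2 := by rw [pow_succ]
  refine ⟨⟨?_, ?_⟩, ?_, ?_⟩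
  · intro h
    by_contra hlt
    push_neg at hlt
    have hz0 : 0 ≤ x - (p - a) := by linarith
    have hmod : (x - (p - a)) % 2 ^ (n + 1) = x - (p - a) :=
      Int.emod_eq_of_lt hz0 (by linarith)
    rw [hmod] at h
    have : (x - (p - a)) / 2 ^ n = 0 := Int.ediv_eq_zero_of_lt hz0 (by linarith)
    omega
  · intro hlt
    have hz : x - (p - a) < 0 := by linarith
    have hz2 : -2 ^ n < x - (p - a) := by linarith
    have hmod : (x - (p - a)) % 2 ^ (n + 1) = x - (p - a) + 2 ^ (n + 1) := by
      have h1 : (x - (p - a) + 2 ^ (n + 1)) % 2 ^ (n + 1) = x - (p - a) + 2 ^ (n + 1) :=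
        Int.emod_eq_of_lt (by linarith) (by linarith)
      calc (x - (p - a)) % 2 ^ (n + 1)
          = (x - (p - a) + 2 ^ (n + 1) * 1) % 2 ^ (n + 1) := by
            rw [Int.add_mul_emod_self_left]
        _ = x - (p - a) + 2 ^ (n + 1) := by rw [mul_one, h1]
    rw [hmod, show x - (p - a) + 2 ^ (n + 1) = (x - (p - a) + 2 ^ n) + 2 ^ n * 1 by
      rw [hpow2]; ring, Int.add_mul_ediv_left _ _ (ne_of_gt hpow)]
    have : (x - (p - a) + 2 ^ n) / 2 ^ n = 0 :=
      Int.ediv_eq_zero_of_lt (by linarith) (by linarith)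
    omega
  · intro hlt
    exact Int.emod_eq_of_lt (by linarith) (by linarith)
  · intro hlt
    push_neg at hlt
    rw [show (x + a) % p = (x + a - p) % p from (Int.sub_emod_right (x + a) p).symm]
    exact Int.emod_eq_of_lt (by linarith) (by linarith)
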